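/- Let ψ, ψ' ∈ ℂ^d be unit vectors and F ⊆ {1, ..., d}. Suppose ∑_{i ∈ F} |ψᵢ|² ≥ 1/2 + ε and ∑_{i ∉ F} |ψ'ᵢ|² ≥ 1/2 + ε for some ε ∈ (3/8, 1/2]. Then ‖ψ - ψ'‖² ≥ 1 + 2ε - 4√(1/2 - ε). -/

import Mathlib

theorem distance_sq_lower_bound (d : ℕ) (hd : 0 < d)
    (ψ ψ' : EuclideanSpace ℂ (Fin d)) (hψ : ‖ψ‖ = 1) (hψ' : ‖ψ'‖ = 1)
    (F : Finset (Fin d)) (ε : ℝ) (hε : ε ∈ Set.Ioc (3/8 : ℝ) (1/2 : ℝ))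
    (hacc : (1/2 : ℝ) + ε ≤ ∑ i ∈ F, ‖ψ i‖ ^ 2)
    (hrej : (1/2 : ℝ) + ε ≤ ∑ i ∈ Fᶜ, ‖ψ' i‖ ^ 2) :
    1 + 2 * ε - 4 * Real.sqrt (1/2 - ε) ≤ ‖ψ - ψ'‖ ^ 2 := by
  obtain ⟨hε1, hε2⟩ := hε
  set δ := Real.sqrt (1/2 - ε) with hδ
  have hδ0 : 0 ≤ δ := Real.sqrt_nonneg _
  have hδsq : δ ^ 2 = 1/2 - ε := Real.sq_sqrt (by linarith)
  have hsum : ∀ (x : EuclideanSpace ℂ (Fin d)), ‖x‖ = 1 → ∑ i, ‖x i‖ ^ 2 = 1 := by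
    intro x hx
    rw [EuclideanSpace.norm_eq] at hx
    exact Real.sqrt_eq_one.mp hx
  have hψsum := hsum ψ hψ
  have hψ'sum := hsum ψ' hψ'
  have hsplit : ∀ f : Fin d → ℝ, ∑ i ∈ F, f i + ∑ i ∈ Fᶜ, f i = ∑ i, f i :=
    fun f => Finset.sum_add_sum_compl F f
  -- partial sum bounds
  have hψF : ∑ i ∈ F, ‖ψ i‖ ^ 2 ≤ 1 := by
    have := hsplit (fun i => ‖ψ i‖ ^ 2)
    have h2 : 0 ≤ ∑ i ∈ Fᶜ, ‖ψ i‖ ^ 2 := Finset.sum_nonneg fun i _ => sq_nonneg _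
    simp only at this
    linarith [hψsum]
  have hψ'Fc : ∑ i ∈ Fᶜ, ‖ψ' i‖ ^ 2 ≤ 1 := by
    have := hsplit (fun i => ‖ψ' i‖ ^ 2)
    have h2 : 0 ≤ ∑ i ∈ F, ‖ψ' i‖ ^ 2 := Finset.sum_nonneg fun i _ => sq_nonneg _
    simp only at this
    linarith [hψ'sum]
  have hψ'F : ∑ i ∈ F, ‖ψ' i‖ ^ 2 ≤ 1/2 - ε := by
    have := hsplit (fun i => ‖ψ' i‖ ^ 2)
    simp only at this
    linarith [hψ'sum]
  have hψFc : ∑ i ∈ Fᶜ, ‖ψ i‖ ^ 2 ≤ 1/2 - ε := by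
    have := hsplit (fun i => ‖ψ i‖ ^ 2)
    simp only at this
    linarith [hψsum]
  -- Cauchy-Schwarz on each part
  have hCS : ∀ s : Finset (Fin d), ∀ a b : ℝ, 0 ≤ a → 0 ≤ b →
      (∑ i ∈ s, ‖ψ i‖ ^ 2) ≤ a ^ 2 → (∑ i ∈ s, ‖ψ' i‖ ^ 2) ≤ b ^ 2 →
      ∑ i ∈ s, ‖ψ i‖ * ‖ψ' i‖ ≤ a * b := by
    intro s a b ha hb h1 h2
    have hcs := Finset.sum_mul_sq_le_sq_mul_sq s (fun i => ‖ψ i‖) (fun i => ‖ψ' i‖)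
    simp only at hcs
    have hpos : 0 ≤ ∑ i ∈ s, ‖ψ i‖ * ‖ψ' i‖ :=
      Finset.sum_nonneg fun i _ => mul_nonneg (norm_nonneg _) (norm_nonneg _)
    have hf : 0 ≤ ∑ i ∈ s, ‖ψ i‖ ^ 2 := Finset.sum_nonneg fun i _ => sq_nonneg _
    have hg : 0 ≤ ∑ i ∈ s, ‖ψ' i‖ ^ 2 := Finset.sum_nonneg fun i _ => sq_nonneg _
    nlinarith [mul_nonneg ha hb, sq_nonneg (a*b)]
  have h1 : ∑ i ∈ F, ‖ψ i‖ * ‖ψ' i‖ ≤ 1 * δ :=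
    hCS F 1 δ zero_le_one hδ0 (by simpa using hψF) (by rw [hδsq]; exact hψ'F)
  have h2 : ∑ i ∈ Fᶜ, ‖ψ i‖ * ‖ψ' i‖ ≤ δ * 1 :=
    hCS Fᶜ δ 1 hδ0 zero_le_one (by rw [hδsq]; exact hψFc) (by simpa using hψ'Fc)
  -- inner product bound
  have hinner : RCLike.re (inner ℂ ψ ψ' : ℂ) ≤ 2 * δ := by
    have : (inner ℂ ψ ψ' : ℂ) = ∑ i, (starRingEnd ℂ) (ψ i) * ψ' i := by
      simp [PiLp.inner_apply, RCLike.inner_apply, mul_comm]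
    calc RCLike.re (inner ℂ ψ ψ' : ℂ)
        = ∑ i, (((starRingEnd ℂ) (ψ i) * ψ' i).re) := by
          rw [this]; simp [Complex.re_sum]
      _ ≤ ∑ i, ‖ψ i‖ * ‖ψ' i‖ := by
          apply Finset.sum_le_sum
          intro i _
          calc ((starRingEnd ℂ) (ψ i) * ψ' i).re ≤ ‖(starRingEnd ℂ) (ψ i) * ψ' i‖ :=
                Complex.re_le_norm _
            _ = ‖ψ i‖ * ‖ψ' i‖ := by
                rw [norm_mul]; simp
      _ = ∑ i ∈ F, ‖ψ i‖ * ‖ψ' i‖ + ∑ i ∈ Fᶜ, ‖ψ i‖ * ‖ψ' i‖ := (hsplit _).symm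
      _ ≤ 1 * δ + δ * 1 := add_le_add h1 h2
      _ = 2 * δ := by ring
  have hns := @norm_sub_sq ℂ _ _ _ _ ψ ψ'
  rw [hψ, hψ'] at hns
  rw [hns]
  linarith
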